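/- If A is a self-dual complex two-form and B is an anti-self-dual complex two-form on Minkowski space, then A and B commute: A·B = B·A. -/

import Mathlib

open Matrix

noncomputable section

/-- The Minkowski metric matrix `diag(1,-1,-1,-1)`. -/
def minkEta : Matrix (Fin 4) (Fin 4) ℂ := Matrix.diagonal ![1, -1, -1, -1]

/-- The Levi-Civita symbol `ε(i,j,k,l)`: the sign of `(i,j,k,l)` as a permutation of
`(0,1,2,3)`, and `0` if the indices are not all distinct; `ε(0,1,2,3) = 1`. -/
def eps (i j k l : Fin 4) : ℂ :=
  Matrix.det (Matrix.of ![Pi.single i 1, Pi.single j 1, Pi.single k 1, Pi.single l 1])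

/-- A (complex) two-form on Minkowski space: `Fᵀ·η + η·F = 0`. -/
def IsTwoForm (F : Matrix (Fin 4) (Fin 4) ℂ) : Prop :=
  Fᵀ * minkEta + minkEta * F = 0

/-- The Hodge dual of a two-form:
`(*F)^μ_ν = (1/2)·Σ η_{μρ}·ε(ρ,ν,σ,τ)·F^σ_λ·η_{λτ}`. -/
def dual (F : Matrix (Fin 4) (Fin 4) ℂ) : Matrix (Fin 4) (Fin 4) ℂ :=
  Matrix.of fun μ ν => (1/2 : ℂ) *
    ∑ ρ : Fin 4, ∑ σ : Fin 4, ∑ lam : Fin 4, ∑ τ : Fin 4,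
      minkEta μ ρ * eps ρ ν σ τ * F σ lam * minkEta lam τ

/-- A self-dual complex two-form: a two-form with `*A = i·A`. -/
def SelfDual (A : Matrix (Fin 4) (Fin 4) ℂ) : Prop :=
  IsTwoForm A ∧ dual A = Complex.I • A

/-- An anti-self-dual complex two-form: a two-form with `*A = -i·A`. -/
def AntiSelfDual (A : Matrix (Fin 4) (Fin 4) ℂ) : Prop :=
  IsTwoForm A ∧ dual A = (-Complex.I) • A

/-- A matrix with real entries. -/
def RealEntries (F : Matrix (Fin 4) (Fin 4) ℂ) : Prop :=
  ∀ i j, (F i j).im = 0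

/-- `SH z = sinh z / z` for `z ≠ 0` and `SH 0 = 1`. -/
def SH (z : ℂ) : ℂ := if z = 0 then 1 else Complex.sinh z / z

set_option linter.unnecessarySeqFocus false
set_option linter.unreachableTactic false
set_option linter.unusedTactic false
set_option maxHeartbeats 1000000

lemma aux_mE00 : minkEta 0 0 = 1 := by norm_num [minkEta, Matrix.diagonal_apply] <;> decide
lemma aux_mE01 : minkEta 0 1 = 0 := by norm_num [minkEta, Matrix.diagonal_apply] <;> decide
lemma aux_mE02 : minkEta 0 2 = 0 := by norm_num [minkEta, Matrix.diagonal_apply] <;> decide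
lemma aux_mE03 : minkEta 0 3 = 0 := by norm_num [minkEta, Matrix.diagonal_apply] <;> decide
lemma aux_mE10 : minkEta 1 0 = 0 := by norm_num [minkEta, Matrix.diagonal_apply] <;> decide
lemma aux_mE11 : minkEta 1 1 = (-1) := by norm_num [minkEta, Matrix.diagonal_apply] <;> decide
lemma aux_mE12 : minkEta 1 2 = 0 := by norm_num [minkEta, Matrix.diagonal_apply] <;> decide
lemma aux_mE13 : minkEta 1 3 = 0 := by norm_num [minkEta, Matrix.diagonal_apply] <;> decide
lemma aux_mE20 : minkEta 2 0 = 0 := by norm_num [minkEta, Matrix.diagonal_apply] <;> decide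
lemma aux_mE21 : minkEta 2 1 = 0 := by norm_num [minkEta, Matrix.diagonal_apply] <;> decide
lemma aux_mE22 : minkEta 2 2 = (-1) := by norm_num [minkEta, Matrix.diagonal_apply] <;> rfl
lemma aux_mE23 : minkEta 2 3 = 0 := by norm_num [minkEta, Matrix.diagonal_apply] <;> decide
lemma aux_mE30 : minkEta 3 0 = 0 := by norm_num [minkEta, Matrix.diagonal_apply] <;> decide
lemma aux_mE31 : minkEta 3 1 = 0 := by norm_num [minkEta, Matrix.diagonal_apply] <;> decide
lemma aux_mE32 : minkEta 3 2 = 0 := by norm_num [minkEta, Matrix.diagonal_apply] <;> decide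
lemma aux_mE33 : minkEta 3 3 = (-1) := by norm_num [minkEta, Matrix.diagonal_apply] <;> rfl
lemma aux_e0100 : eps 0 1 0 0 = 0 := by
  apply Matrix.det_zero_of_row_eq (i := 2) (j := 3) (by decide) rfl
lemma aux_e0101 : eps 0 1 0 1 = 0 := by
  apply Matrix.det_zero_of_row_eq (i := 1) (j := 3) (by decide) rfl
lemma aux_e0102 : eps 0 1 0 2 = 0 := by
  apply Matrix.det_zero_of_row_eq (i := 0) (j := 2) (by decide) rfl
lemma aux_e0103 : eps 0 1 0 3 = 0 := by
  apply Matrix.det_zero_of_row_eq (i := 0) (j := 2) (by decide) rfl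
lemma aux_e0110 : eps 0 1 1 0 = 0 := by
  apply Matrix.det_zero_of_row_eq (i := 1) (j := 2) (by decide) rfl
lemma aux_e0111 : eps 0 1 1 1 = 0 := by
  apply Matrix.det_zero_of_row_eq (i := 2) (j := 3) (by decide) rfl
lemma aux_e0112 : eps 0 1 1 2 = 0 := by
  apply Matrix.det_zero_of_row_eq (i := 1) (j := 2) (by decide) rfl
lemma aux_e0113 : eps 0 1 1 3 = 0 := by
  apply Matrix.det_zero_of_row_eq (i := 1) (j := 2) (by decide) rfl
lemma aux_e0120 : eps 0 1 2 0 = 0 := by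
  apply Matrix.det_zero_of_row_eq (i := 0) (j := 3) (by decide) rfl
lemma aux_e0121 : eps 0 1 2 1 = 0 := by
  apply Matrix.det_zero_of_row_eq (i := 1) (j := 3) (by decide) rfl
lemma aux_e0122 : eps 0 1 2 2 = 0 := by
  apply Matrix.det_zero_of_row_eq (i := 2) (j := 3) (by decide) rfl
lemma aux_e0123 : eps 0 1 2 3 = 1 := by simp [eps, Matrix.det_succ_row_zero, Fin.sum_univ_succ, Pi.single_apply] <;> first | decide | norm_num [show (Fin.succ 2 : Fin 4) = 3 by rfl, show (Fin.succ 1 : Fin 4) = 2 by rfl, show (Fin.succ 0 : Fin 4) = 1 by rfl]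
lemma aux_e0130 : eps 0 1 3 0 = 0 := by
  apply Matrix.det_zero_of_row_eq (i := 0) (j := 3) (by decide) rfl
lemma aux_e0131 : eps 0 1 3 1 = 0 := by
  apply Matrix.det_zero_of_row_eq (i := 1) (j := 3) (by decide) rfl
lemma aux_e0132 : eps 0 1 3 2 = (-1) := by simp [eps, Matrix.det_succ_row_zero, Fin.sum_univ_succ, Pi.single_apply] <;> first | decide | norm_num [show (Fin.succ 2 : Fin 4) = 3 by rfl, show (Fin.succ 1 : Fin 4) = 2 by rfl, show (Fin.succ 0 : Fin 4) = 1 by rfl]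
lemma aux_e0133 : eps 0 1 3 3 = 0 := by
  apply Matrix.det_zero_of_row_eq (i := 2) (j := 3) (by decide) rfl
lemma aux_e0200 : eps 0 2 0 0 = 0 := by
  apply Matrix.det_zero_of_row_eq (i := 2) (j := 3) (by decide) rfl
lemma aux_e0201 : eps 0 2 0 1 = 0 := by
  apply Matrix.det_zero_of_row_eq (i := 0) (j := 2) (by decide) rfl
lemma aux_e0202 : eps 0 2 0 2 = 0 := by
  apply Matrix.det_zero_of_row_eq (i := 1) (j := 3) (by decide) rfl
lemma aux_e0203 : eps 0 2 0 3 = 0 := by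
  apply Matrix.det_zero_of_row_eq (i := 0) (j := 2) (by decide) rfl
lemma aux_e0210 : eps 0 2 1 0 = 0 := by
  apply Matrix.det_zero_of_row_eq (i := 0) (j := 3) (by decide) rfl
lemma aux_e0211 : eps 0 2 1 1 = 0 := by
  apply Matrix.det_zero_of_row_eq (i := 2) (j := 3) (by decide) rfl
lemma aux_e0212 : eps 0 2 1 2 = 0 := by
  apply Matrix.det_zero_of_row_eq (i := 1) (j := 3) (by decide) rfl
lemma aux_e0213 : eps 0 2 1 3 = (-1) := by simp [eps, Matrix.det_succ_row_zero, Fin.sum_univ_succ, Pi.single_apply] <;> first | decide | norm_num [show (Fin.succ 2 : Fin 4) = 3 by rfl, show (Fin.succ 1 : Fin 4) = 2 by rfl, show (Fin.succ 0 : Fin 4) = 1 by rfl]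
lemma aux_e0220 : eps 0 2 2 0 = 0 := by
  apply Matrix.det_zero_of_row_eq (i := 1) (j := 2) (by decide) rfl
lemma aux_e0221 : eps 0 2 2 1 = 0 := by
  apply Matrix.det_zero_of_row_eq (i := 1) (j := 2) (by decide) rfl
lemma aux_e0222 : eps 0 2 2 2 = 0 := by
  apply Matrix.det_zero_of_row_eq (i := 2) (j := 3) (by decide) rfl
lemma aux_e0223 : eps 0 2 2 3 = 0 := by
  apply Matrix.det_zero_of_row_eq (i := 1) (j := 2) (by decide) rfl
lemma aux_e0230 : eps 0 2 3 0 = 0 := by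
  apply Matrix.det_zero_of_row_eq (i := 0) (j := 3) (by decide) rfl
lemma aux_e0231 : eps 0 2 3 1 = 1 := by simp [eps, Matrix.det_succ_row_zero, Fin.sum_univ_succ, Pi.single_apply] <;> first | decide | norm_num [show (Fin.succ 2 : Fin 4) = 3 by rfl, show (Fin.succ 1 : Fin 4) = 2 by rfl, show (Fin.succ 0 : Fin 4) = 1 by rfl]
lemma aux_e0232 : eps 0 2 3 2 = 0 := by
  apply Matrix.det_zero_of_row_eq (i := 1) (j := 3) (by decide) rfl
lemma aux_e0233 : eps 0 2 3 3 = 0 := by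
  apply Matrix.det_zero_of_row_eq (i := 2) (j := 3) (by decide) rfl
lemma aux_e0300 : eps 0 3 0 0 = 0 := by
  apply Matrix.det_zero_of_row_eq (i := 2) (j := 3) (by decide) rfl
lemma aux_e0301 : eps 0 3 0 1 = 0 := by
  apply Matrix.det_zero_of_row_eq (i := 0) (j := 2) (by decide) rfl
lemma aux_e0302 : eps 0 3 0 2 = 0 := by
  apply Matrix.det_zero_of_row_eq (i := 0) (j := 2) (by decide) rfl
lemma aux_e0303 : eps 0 3 0 3 = 0 := by
  apply Matrix.det_zero_of_row_eq (i := 1) (j := 3) (by decide) rfl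
lemma aux_e0310 : eps 0 3 1 0 = 0 := by
  apply Matrix.det_zero_of_row_eq (i := 0) (j := 3) (by decide) rfl
lemma aux_e0311 : eps 0 3 1 1 = 0 := by
  apply Matrix.det_zero_of_row_eq (i := 2) (j := 3) (by decide) rfl
lemma aux_e0312 : eps 0 3 1 2 = 1 := by simp [eps, Matrix.det_succ_row_zero, Fin.sum_univ_succ, Pi.single_apply] <;> first | decide | norm_num [show (Fin.succ 2 : Fin 4) = 3 by rfl, show (Fin.succ 1 : Fin 4) = 2 by rfl, show (Fin.succ 0 : Fin 4) = 1 by rfl]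
lemma aux_e0313 : eps 0 3 1 3 = 0 := by
  apply Matrix.det_zero_of_row_eq (i := 1) (j := 3) (by decide) rfl
lemma aux_e0320 : eps 0 3 2 0 = 0 := by
  apply Matrix.det_zero_of_row_eq (i := 0) (j := 3) (by decide) rfl
lemma aux_e0321 : eps 0 3 2 1 = (-1) := by simp [eps, Matrix.det_succ_row_zero, Fin.sum_univ_succ, Pi.single_apply] <;> first | decide | norm_num [show (Fin.succ 2 : Fin 4) = 3 by rfl, show (Fin.succ 1 : Fin 4) = 2 by rfl, show (Fin.succ 0 : Fin 4) = 1 by rfl]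
lemma aux_e0322 : eps 0 3 2 2 = 0 := by
  apply Matrix.det_zero_of_row_eq (i := 2) (j := 3) (by decide) rfl
lemma aux_e0323 : eps 0 3 2 3 = 0 := by
  apply Matrix.det_zero_of_row_eq (i := 1) (j := 3) (by decide) rfl
lemma aux_e0330 : eps 0 3 3 0 = 0 := by
  apply Matrix.det_zero_of_row_eq (i := 1) (j := 2) (by decide) rfl
lemma aux_e0331 : eps 0 3 3 1 = 0 := by
  apply Matrix.det_zero_of_row_eq (i := 1) (j := 2) (by decide) rfl
lemma aux_e0332 : eps 0 3 3 2 = 0 := by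
  apply Matrix.det_zero_of_row_eq (i := 1) (j := 2) (by decide) rfl
lemma aux_e0333 : eps 0 3 3 3 = 0 := by
  apply Matrix.det_zero_of_row_eq (i := 2) (j := 3) (by decide) rfl

lemma aux_dual01 (F : Matrix (Fin 4) (Fin 4) ℂ) : dual F 0 1 = (-F 2 3 + F 3 2)/2 := by
  simp only [dual, Matrix.of_apply, Fin.sum_univ_four, aux_mE00, aux_mE01, aux_mE02, aux_mE03, aux_mE10, aux_mE11, aux_mE12, aux_mE13, aux_mE20, aux_mE21, aux_mE22, aux_mE23, aux_mE30, aux_mE31, aux_mE32, aux_mE33, aux_e0100, aux_e0101, aux_e0102, aux_e0103, aux_e0110, aux_e0111, aux_e0112, aux_e0113, aux_e0120, aux_e0121, aux_e0122, aux_e0123, aux_e0130, aux_e0131, aux_e0132, aux_e0133, aux_e0200, aux_e0201, aux_e0202, aux_e0203, aux_e0210, aux_e0211, aux_e0212, aux_e0213, aux_e0220, aux_e0221, aux_e0222, aux_e0223, aux_e0230, aux_e0231, aux_e0232, aux_e0233, aux_e0300, aux_e0301, aux_e0302, aux_e0303, aux_e0310, aux_e0311, aux_e0312, aux_e0313, aux_e0320,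 aux_e0321, aux_e0322, aux_e0323, aux_e0330, aux_e0331, aux_e0332, aux_e0333,
    zero_mul, mul_zero, add_zero, zero_add, one_mul, mul_one, neg_mul, mul_neg, neg_neg]
  ring


lemma aux_dual02 (F : Matrix (Fin 4) (Fin 4) ℂ) : dual F 0 2 = (F 1 3 - F 3 1)/2 := by
  simp only [dual, Matrix.of_apply, Fin.sum_univ_four, aux_mE00, aux_mE01, aux_mE02, aux_mE03, aux_mE10, aux_mE11, aux_mE12, aux_mE13, aux_mE20, aux_mE21, aux_mE22, aux_mE23, aux_mE30, aux_mE31, aux_mE32, aux_mE33, aux_e0100, aux_e0101, aux_e0102, aux_e0103, aux_e0110, aux_e0111, aux_e0112, aux_e0113, aux_e0120, aux_e0121, aux_e0122, aux_e0123, aux_e0130, aux_e0131, aux_e0132, aux_e0133, aux_e0200, aux_e0201, aux_e0202, aux_e0203, aux_e0210, aux_e0211, aux_e0212, aux_e0213, aux_e0220, aux_e0221, aux_e0222, aux_e0223, aux_e0230, aux_e0231, aux_e0232, aux_e0233, aux_e0300, aux_e0301, aux_e0302, aux_e0303, aux_e0310, aux_e0311, aux_e0312, aux_e0313, aux_e0320,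 aux_e0321, aux_e0322, aux_e0323, aux_e0330, aux_e0331, aux_e0332, aux_e0333,
    zero_mul, mul_zero, add_zero, zero_add, one_mul, mul_one, neg_mul, mul_neg, neg_neg]
  ring


lemma aux_dual03 (F : Matrix (Fin 4) (Fin 4) ℂ) : dual F 0 3 = (-F 1 2 + F 2 1)/2 := by
  simp only [dual, Matrix.of_apply, Fin.sum_univ_four, aux_mE00, aux_mE01, aux_mE02, aux_mE03, aux_mE10, aux_mE11, aux_mE12, aux_mE13, aux_mE20, aux_mE21, aux_mE22, aux_mE23, aux_mE30, aux_mE31, aux_mE32, aux_mE33, aux_e0100, aux_e0101, aux_e0102, aux_e0103, aux_e0110, aux_e0111, aux_e0112, aux_e0113, aux_e0120, aux_e0121, aux_e0122, aux_e0123, aux_e0130, aux_e0131, aux_e0132, aux_e0133, aux_e0200, aux_e0201, aux_e0202, aux_e0203, aux_e0210, aux_e0211, aux_e0212, aux_e0213, aux_e0220, aux_e0221, aux_e0222, aux_e0223, aux_e0230, aux_e0231, aux_e0232, aux_e0233, aux_e0300, aux_e0301, aux_e0302, aux_e0303, aux_e0310, aux_e0311, aux_e0312, aux_e0313, aux_e0320,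 aux_e0321, aux_e0322, aux_e0323, aux_e0330, aux_e0331, aux_e0332, aux_e0333,
    zero_mul, mul_zero, add_zero, zero_add, one_mul, mul_one, neg_mul, mul_neg, neg_neg]
  ring


lemma aux_twoForm_entries (A : Matrix (Fin 4) (Fin 4) ℂ) (h1 : IsTwoForm A) (i j : Fin 4) :
    A j i * minkEta j j + minkEta i i * A i j = 0 := by
  have t := congrFun (congrFun h1 i) j
  simpa [Matrix.add_apply, Matrix.mul_apply, Matrix.transpose_apply, Fin.sum_univ_four,
    minkEta, Matrix.diagonal_apply] using t

/-- explicit self-dual matrix -/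
def aux_SD (a1 a2 a3 : ℂ) : Matrix (Fin 4) (Fin 4) ℂ :=
  Matrix.of ![![0, a1, a2, a3],
    ![a1, 0, -(Complex.I * a3), Complex.I * a2],
    ![a2, Complex.I * a3, 0, -(Complex.I * a1)],
    ![a3, -(Complex.I * a2), Complex.I * a1, 0]]

/-- explicit anti-self-dual matrix -/
def aux_ASD (b1 b2 b3 : ℂ) : Matrix (Fin 4) (Fin 4) ℂ :=
  Matrix.of ![![0, b1, b2, b3],
    ![b1, 0, Complex.I * b3, -(Complex.I * b2)],
    ![b2, -(Complex.I * b3), 0, Complex.I * b1],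
    ![b3, Complex.I * b2, -(Complex.I * b1), 0]]


lemma aux_sd_param (A : Matrix (Fin 4) (Fin 4) ℂ) (h1 : IsTwoForm A) (h2 : dual A = (Complex.I) • A) :
    A = aux_SD (A 0 1) (A 0 2) (A 0 3) := by
  have t := aux_twoForm_entries A h1
  have d00 := t 0 0; have d11 := t 1 1; have d22 := t 2 2; have d33 := t 3 3
  have s10 := t 1 0; have s20 := t 2 0; have s30 := t 3 0
  have a21 := t 2 1; have a31 := t 3 1; have a32 := t 3 2
  simp only [aux_mE00, aux_mE11, aux_mE22, aux_mE33] at d00 d11 d22 d33 s10 s20 s30 a21 a31 a32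
  have u1 := congrFun (congrFun h2 0) 1
  have u2 := congrFun (congrFun h2 0) 2
  have u3 := congrFun (congrFun h2 0) 3
  rw [aux_dual01] at u1; rw [aux_dual02] at u2; rw [aux_dual03] at u3
  simp only [Matrix.smul_apply, smul_eq_mul] at u1 u2 u3
  ext i j
  fin_cases i <;> fin_cases j <;> simp [aux_SD] <;>
    first | ring1 | linear_combination d00/2 | linear_combination -d11/2 | linear_combination -d22/2 | linear_combination -d33/2 | linear_combination -s10 | linear_combination -s20 | linear_combination -s30 | linear_combination u3 - a21/2 | linear_combination -u3 - a21/2 | linear_combination u2 - a31/2 | linear_combination -u2 - a31/2 | linear_combination -u1 - a32/2 | linear_combination u1 - a32/2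


lemma aux_asd_param (A : Matrix (Fin 4) (Fin 4) ℂ) (h1 : IsTwoForm A) (h2 : dual A = (-Complex.I) • A) :
    A = aux_ASD (A 0 1) (A 0 2) (A 0 3) := by
  have t := aux_twoForm_entries A h1
  have d00 := t 0 0; have d11 := t 1 1; have d22 := t 2 2; have d33 := t 3 3
  have s10 := t 1 0; have s20 := t 2 0; have s30 := t 3 0
  have a21 := t 2 1; have a31 := t 3 1; have a32 := t 3 2
  simp only [aux_mE00, aux_mE11, aux_mE22, aux_mE33] at d00 d11 d22 d33 s10 s20 s30 a21 a31 a32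
  have u1 := congrFun (congrFun h2 0) 1
  have u2 := congrFun (congrFun h2 0) 2
  have u3 := congrFun (congrFun h2 0) 3
  rw [aux_dual01] at u1; rw [aux_dual02] at u2; rw [aux_dual03] at u3
  simp only [Matrix.smul_apply, smul_eq_mul] at u1 u2 u3
  ext i j
  fin_cases i <;> fin_cases j <;> simp [aux_ASD] <;>
    first | ring1 | linear_combination d00/2 | linear_combination -d11/2 | linear_combination -d22/2 | linear_combination -d33/2 | linear_combination -s10 | linear_combination -s20 | linear_combination -s30 | linear_combination u3 - a21/2 | linear_combination -u3 - a21/2 | linear_combination u2 - a31/2 | linear_combination -u2 - a31/2 | linear_combination -u1 - a32/2 | linear_combination u1 - a32/2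


lemma aux_comm (a1 a2 a3 b1 b2 b3 : ℂ) :
    aux_SD a1 a2 a3 * aux_ASD b1 b2 b3 = aux_ASD b1 b2 b3 * aux_SD a1 a2 a3 := by
  ext i j
  fin_cases i <;> fin_cases j <;>
    simp [aux_SD, aux_ASD, Matrix.mul_apply, Fin.sum_univ_four] <;>
    first | ring1 | linear_combination (a1*b2 - a2*b1) * Complex.I_sq | linear_combination (a2*b1 - a1*b2) * Complex.I_sq | linear_combination (a1*b3 - a3*b1) * Complex.I_sq | linear_combination (a3*b1 - a1*b3) * Complex.I_sq | linear_combination (a2*b3 - a3*b2) * Complex.I_sq | linear_combination (a3*b2 - a2*b3) * Complex.I_sq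

/-- A self-dual and an anti-self-dual two-form commute. -/
theorem selfDual_mul_antiSelfDual_comm (A B : Matrix (Fin 4) (Fin 4) ℂ)
    (hA : SelfDual A) (hB : AntiSelfDual B) :
    A * B = B * A := by
  obtain ⟨hA1, hA2⟩ := hA
  obtain ⟨hB1, hB2⟩ := hB
  rw [aux_sd_param A hA1 hA2, aux_asd_param B hB1 hB2]
  exact aux_comm (A 0 1) (A 0 2) (A 0 3) (B 0 1) (B 0 2) (B 0 3)
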